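/- Let q(x) = p(x)^{1/d} where p is L-Lipschitz and bounded below by p_min > 0. For λ < 1 and ‖x − y‖ ≤ p_min·λ/L, the q-distance satisfies (1 − λ)^{1/d} q(x)‖x − y‖ ≤ D_q(x,y) ≤ (1 + λ)^{1/d} q(x)‖x − y‖, provided the ball {z : ‖z − x‖ ≤ p_min·λ/L} contains the straight segment from x to y and every q-geodesic between x and y. -/

import Mathlib

open Set

noncomputable def fLength {d : ℕ} (f : EuclideanSpace ℝ (Fin d) → ℝ)
    (γ : ℝ → EuclideanSpace ℝ (Fin d)) : ℝ :=
  ∫ t in (0:ℝ)..1, f (γ t) * ‖deriv γ t‖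

def IsPathIn {d : ℕ} (X : Set (EuclideanSpace ℝ (Fin d)))
    (x y : EuclideanSpace ℝ (Fin d)) (γ : ℝ → EuclideanSpace ℝ (Fin d)) : Prop :=
  γ 0 = x ∧ γ 1 = y ∧ (∀ t ∈ Set.Icc (0:ℝ) 1, γ t ∈ X) ∧
    ContDiffOn ℝ 1 γ (Set.Icc (0:ℝ) 1)

noncomputable def fDist {d : ℕ} (X : Set (EuclideanSpace ℝ (Fin d)))
    (f : EuclideanSpace ℝ (Fin d) → ℝ) (x y : EuclideanSpace ℝ (Fin d)) : ℝ :=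
  sInf {l | ∃ γ : ℝ → EuclideanSpace ℝ (Fin d), IsPathIn X x y γ ∧ fLength f γ = l}

open MeasureTheory

lemma aux_hasDerivAt {d : ℕ} {γ : ℝ → EuclideanSpace ℝ (Fin d)}
    (hγ : ContDiffOn ℝ 1 γ (Set.Icc (0:ℝ) 1)) {t : ℝ} (ht : t ∈ Set.Ioo (0:ℝ) 1) :
    HasDerivAt γ (deriv γ t) t := by
  have h := (hγ.differentiableOn one_ne_zero) t (Set.mem_Icc_of_Ioo ht)
  exact (h.differentiableAt (Icc_mem_nhds ht.1 ht.2)).hasDerivAt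

lemma aux_ae {d : ℕ} {γ : ℝ → EuclideanSpace ℝ (Fin d)}
    {a b : ℝ} (ha : 0 ≤ a) (hab : a ≤ b) (hb : b ≤ 1) :
    deriv γ =ᵐ[volume.restrict (Set.uIoc a b)]
      derivWithin γ (Set.Icc (0:ℝ) 1) := by
  rw [Set.uIoc_of_le hab]
  have h2 : ∀ᵐ t : ℝ, t ≠ (1:ℝ) := by
    rw [MeasureTheory.ae_iff]
    simpa using Real.volume_singleton
  filter_upwards [ae_restrict_mem measurableSet_Ioc, ae_restrict_of_ae h2] with t ht hne
  have ht' : t ∈ Set.Ioo (0:ℝ) 1 :=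
    ⟨lt_of_le_of_lt ha ht.1, lt_of_le_of_ne (le_trans ht.2 hb) hne⟩
  exact (derivWithin_of_mem_nhds (Icc_mem_nhds ht'.1 ht'.2)).symm

lemma aux_intable {d : ℕ} {γ : ℝ → EuclideanSpace ℝ (Fin d)}
    (hγ : ContDiffOn ℝ 1 γ (Set.Icc (0:ℝ) 1))
    (f : EuclideanSpace ℝ (Fin d) → ℝ) (hf : Continuous f)
    {a b : ℝ} (ha : 0 ≤ a) (hab : a ≤ b) (hb : b ≤ 1) :
    IntervalIntegrable (fun t => f (γ t) * ‖deriv γ t‖) volume a b := by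
  set D := derivWithin γ (Set.Icc (0:ℝ) 1) with hD
  have hDc : ContinuousOn D (Set.Icc (0:ℝ) 1) :=
    hγ.continuousOn_derivWithin (uniqueDiffOn_Icc one_pos) le_rfl
  have hsub : Set.uIcc a b ⊆ Set.Icc (0:ℝ) 1 := by
    rw [Set.uIcc_of_le hab]; exact Set.Icc_subset_Icc ha hb
  have h1 : IntervalIntegrable (fun t => f (γ t) * ‖D t‖) volume a b := by
    apply ContinuousOn.intervalIntegrable
    exact ((hf.comp_continuousOn (hγ.continuousOn.mono hsub)).mul
      ((hDc.mono hsub).norm))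
  refine h1.congr_ae ?_
  filter_upwards [aux_ae (γ := γ) ha hab hb] with t ht
  rw [ht]

lemma aux_intable' {d : ℕ} {γ : ℝ → EuclideanSpace ℝ (Fin d)}
    (hγ : ContDiffOn ℝ 1 γ (Set.Icc (0:ℝ) 1))
    {a b : ℝ} (ha : 0 ≤ a) (hab : a ≤ b) (hb : b ≤ 1) :
    IntervalIntegrable (deriv γ) volume a b := by
  have hDc : ContinuousOn (derivWithin γ (Set.Icc (0:ℝ) 1)) (Set.Icc (0:ℝ) 1) :=
    hγ.continuousOn_derivWithin (uniqueDiffOn_Icc one_pos) le_rfl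
  have hsub : Set.uIcc a b ⊆ Set.Icc (0:ℝ) 1 := by
    rw [Set.uIcc_of_le hab]; exact Set.Icc_subset_Icc ha hb
  refine ((hDc.mono hsub).intervalIntegrable).congr_ae ?_
  filter_upwards [aux_ae (γ := γ) ha hab hb] with t ht
  rw [ht]

lemma aux_ftc {d : ℕ} {γ : ℝ → EuclideanSpace ℝ (Fin d)}
    (hγ : ContDiffOn ℝ 1 γ (Set.Icc (0:ℝ) 1))
    {a b : ℝ} (ha : 0 ≤ a) (hab : a ≤ b) (hb : b ≤ 1) :
    ‖γ b - γ a‖ ≤ ∫ t in a..b, ‖deriv γ t‖ := by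
  have heq : (∫ t in a..b, deriv γ t) = γ b - γ a := by
    apply intervalIntegral.integral_eq_sub_of_hasDeriv_right_of_le hab
      (hγ.continuousOn.mono (Set.Icc_subset_Icc ha hb))
      (fun t ht => (aux_hasDerivAt hγ
        ⟨lt_of_le_of_lt ha ht.1, lt_of_lt_of_le ht.2 hb⟩).hasDerivWithinAt)
      (aux_intable' hγ ha hab hb)
  rw [← heq]
  exact intervalIntegral.norm_integral_le_integral_norm hab

lemma low_path {d : ℕ} {q : EuclideanSpace ℝ (Fin d) → ℝ} (hqc : Continuous q)
    (hq0 : ∀ z, 0 ≤ q z) {x y : EuclideanSpace ℝ (Fin d)} {r c : ℝ}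
    (hr : 0 < r) (hc : 0 ≤ c) (hxy : ‖x - y‖ ≤ r)
    (hball : ∀ z, ‖z - x‖ ≤ r → c ≤ q z)
    {γ : ℝ → EuclideanSpace ℝ (Fin d)} {X : Set (EuclideanSpace ℝ (Fin d))}
    (hγ : IsPathIn X x y γ) :
    c * ‖x - y‖ ≤ fLength q γ := by
  obtain ⟨h0, h1, hmem, hsm⟩ := hγ
  -- main claim
  have claim : ∀ τ ∈ Set.Icc (0:ℝ) 1, (∀ t ∈ Set.Icc 0 τ, ‖γ t - x‖ ≤ r) →
      c * ‖γ τ - x‖ ≤ fLength q γ := by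
    intro τ hτ hin
    have hτ0 : (0:ℝ) ≤ τ := hτ.1
    have hτ1 : τ ≤ 1 := hτ.2
    have step1 : c * ‖γ τ - x‖ ≤ c * ∫ t in (0:ℝ)..τ, ‖deriv γ t‖ := by
      have := aux_ftc hsm le_rfl hτ0 hτ1
      rw [h0] at this
      exact mul_le_mul_of_nonneg_left this hc
    have step2 : c * (∫ t in (0:ℝ)..τ, ‖deriv γ t‖) ≤
        ∫ t in (0:ℝ)..τ, q (γ t) * ‖deriv γ t‖ := by
      rw [← intervalIntegral.integral_const_mul]
      apply intervalIntegral.integral_mono_on hτ0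
      · exact aux_intable hsm (fun _ => c) continuous_const le_rfl hτ0 hτ1
      · exact aux_intable hsm q hqc le_rfl hτ0 hτ1
      · intro t ht
        have htI : t ∈ Set.Icc (0:ℝ) 1 := ⟨ht.1, le_trans ht.2 hτ1⟩
        exact mul_le_mul_of_nonneg_right (hball _ (hin t ht)) (norm_nonneg _)
    have step3 : (∫ t in (0:ℝ)..τ, q (γ t) * ‖deriv γ t‖) ≤ fLength q γ := by
      unfold fLength
      rw [← intervalIntegral.integral_add_adjacent_intervals
        (aux_intable hsm q hqc le_rfl hτ0 hτ1) (aux_intable hsm q hqc hτ0 hτ1 le_rfl)]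
      have : 0 ≤ ∫ t in τ..1, q (γ t) * ‖deriv γ t‖ :=
        intervalIntegral.integral_nonneg hτ1
          (fun u _ => mul_nonneg (hq0 _) (norm_nonneg _))
      linarith
    linarith
  by_cases hcase : ∀ t ∈ Set.Icc (0:ℝ) 1, ‖γ t - x‖ ≤ r
  · have := claim 1 ⟨zero_le_one, le_rfl⟩ (fun t ht => hcase t ht)
    rw [h1, norm_sub_rev] at this
    exact this
  · push_neg at hcase
    obtain ⟨τ, hτI, hτr⟩ := hcase
    set S : Set ℝ := {t | t ∈ Set.Icc (0:ℝ) 1 ∧ r ≤ ‖γ t - x‖} with hS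
    have hScl : IsClosed S := by
      have hφ : ContinuousOn (fun t => ‖γ t - x‖) (Set.Icc (0:ℝ) 1) :=
        (hsm.continuousOn.sub continuousOn_const).norm
      have := hφ.preimage_isClosed_of_isClosed isClosed_Icc (isClosed_Ici (a := r))
      convert this using 1
      rfl
    have hSne : S.Nonempty := ⟨τ, hτI, le_of_lt hτr⟩
    have hSbd : BddBelow S := ⟨0, fun t ht => ht.1.1⟩
    set τ0 := sInf S with hτ0def
    have hτ0S : τ0 ∈ S := hScl.csInf_mem hSne hSbd
    have hτ0pos : 0 < τ0 := by
      rcases lt_or_eq_of_le hτ0S.1.1 with h | h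
      · exact h
      · exfalso
        have : r ≤ ‖γ τ0 - x‖ := hτ0S.2
        rw [← h, h0] at this
        simp only [sub_self, norm_zero] at this
        linarith
    have hlt : ∀ t, 0 ≤ t → t < τ0 → ‖γ t - x‖ < r := by
      intro t ht0 htlt
      by_contra hge
      push_neg at hge
      have : t ∈ S := ⟨⟨ht0, le_trans (le_of_lt htlt) hτ0S.1.2⟩, hge⟩
      exact absurd (csInf_le hSbd this) (not_le.2 htlt)
    have hin2 : ‖γ τ0 - x‖ ≤ r := by
      have hclos : τ0 ∈ closure (Set.Ico (0:ℝ) τ0) := by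
        rw [closure_Ico (ne_of_lt hτ0pos)]
        exact ⟨le_of_lt hτ0pos, le_rfl⟩
      have hne : (nhdsWithin τ0 (Set.Ico (0:ℝ) τ0)).NeBot :=
        mem_closure_iff_nhdsWithin_neBot.mp hclos
      have htend : Filter.Tendsto (fun s => ‖γ s - x‖) (nhdsWithin τ0 (Set.Ico (0:ℝ) τ0))
          (nhds ‖γ τ0 - x‖) := by
        have hφ : ContinuousOn (fun s => ‖γ s - x‖) (Set.Icc (0:ℝ) 1) :=
          (hsm.continuousOn.sub continuousOn_const).norm
        exact (hφ τ0 hτ0S.1).mono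
          (Set.Ico_subset_Icc_self.trans (Set.Icc_subset_Icc le_rfl hτ0S.1.2))
      refine le_of_tendsto htend ?_
      filter_upwards [self_mem_nhdsWithin] with s hs
      exact le_of_lt (hlt s hs.1 hs.2)
    have hin : ∀ t ∈ Set.Icc (0:ℝ) τ0, ‖γ t - x‖ ≤ r := by
      intro t ht
      rcases lt_or_eq_of_le ht.2 with h | h
      · exact le_of_lt (hlt t ht.1 h)
      · rw [h]; exact hin2
    have := claim τ0 hτ0S.1 hin
    have hcr : c * r ≤ c * ‖γ τ0 - x‖ := mul_le_mul_of_nonneg_left hτ0S.2 hc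
    have hxr : c * ‖x - y‖ ≤ c * r := mul_le_mul_of_nonneg_left hxy hc
    linarith



/-- for `q = p^{1/d}` with `p` `L`-Lipschitz and bounded below by
`p_min > 0`, `λ < 1`, and `‖x − y‖ ≤ p_min·λ/L`: the `q`-distance satisfies
`(1 − λ)^{1/d} q(x)‖x − y‖ ≤ D_q(x,y) ≤ (1 + λ)^{1/d} q(x)‖x − y‖`,
provided the ball `{z : ‖z − x‖ ≤ p_min·λ/L}` lies in `X` (so it contains the
straight segment from `x` to `y`) and contains every `q`-geodesic between `x` and `y`. -/
theorem fDist_approx_small_ball {d : ℕ} (hd : 1 ≤ d)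
    (X : Set (EuclideanSpace ℝ (Fin d)))
    (p : EuclideanSpace ℝ (Fin d) → ℝ)
    (L pmin : ℝ) (hL : 0 < L) (hpmin : 0 < pmin)
    (hlip : ∀ x y, |p x - p y| ≤ L * ‖x - y‖)
    (hlow : ∀ x, pmin ≤ p x)
    (q : EuclideanSpace ℝ (Fin d) → ℝ)
    (hq : ∀ x, q x = (p x) ^ ((1:ℝ)/d))
    (lam : ℝ) (hlam0 : 0 ≤ lam) (hlam : lam < 1)
    (x y : EuclideanSpace ℝ (Fin d)) (hx : x ∈ X) (hy : y ∈ X)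
    (hxy : ‖x - y‖ ≤ pmin * lam / L)
    (hseg : segment ℝ x y ⊆ Metric.closedBall x (pmin * lam / L) ∩ X)
    (hgeo : ∀ γ : ℝ → EuclideanSpace ℝ (Fin d), IsPathIn X x y γ →
      fLength q γ = fDist X q x y →
      ∀ t ∈ Set.Icc (0:ℝ) 1, γ t ∈ Metric.closedBall x (pmin * lam / L)) :
    (1 - lam) ^ ((1:ℝ)/d) * q x * ‖x - y‖ ≤ fDist X q x y ∧
    fDist X q x y ≤ (1 + lam) ^ ((1:ℝ)/d) * q x * ‖x - y‖ := by
  set r : ℝ := pmin * lam / L with hrdef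
  have hr0 : 0 ≤ r := div_nonneg (mul_nonneg hpmin.le hlam0) hL.le
  have hexp : (0:ℝ) < 1 / d := by
    have : (1:ℝ) ≤ (d:ℝ) := by exact_mod_cast hd
    positivity
  have hp0 : ∀ z, 0 < p z := fun z => lt_of_lt_of_le hpmin (hlow z)
  have hpc : Continuous p := by
    have : LipschitzWith (Real.toNNReal L) p := by
      apply LipschitzWith.of_dist_le_mul
      intro a b
      rw [Real.dist_eq, dist_eq_norm, Real.coe_toNNReal _ hL.le]
      exact hlip a b
    exact this.continuous
  have hqc : Continuous q := by
    have : q = fun z => p z ^ ((1:ℝ)/d) := funext hq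
    rw [this]
    exact continuous_iff_continuousAt.2 fun z =>
      (Real.continuousAt_rpow_const _ _ (Or.inl (ne_of_gt (hp0 z)))).comp hpc.continuousAt
  have hq0 : ∀ z, 0 ≤ q z := fun z => (hq z).symm ▸ Real.rpow_nonneg (hp0 z).le _
  -- pointwise bounds on the ball
  have hLr : L * r = pmin * lam := by
    rw [hrdef, mul_div_assoc']; exact mul_div_cancel_left₀ _ hL.ne'
  have hpball : ∀ z, ‖z - x‖ ≤ r → (1 - lam) * p x ≤ p z ∧ p z ≤ (1 + lam) * p x := by
    intro z hz
    have h := hlip z x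
    have h2 : |p z - p x| ≤ pmin * lam := by
      calc |p z - p x| ≤ L * ‖z - x‖ := h
        _ ≤ L * r := by nlinarith
        _ = pmin * lam := hLr
    have h3 : pmin * lam ≤ p x * lam := by nlinarith [hlow x]
    rw [abs_le] at h2
    constructor <;> nlinarith
  have hqlow : ∀ z, ‖z - x‖ ≤ r → (1 - lam) ^ ((1:ℝ)/d) * q x ≤ q z := by
    intro z hz
    rw [hq z, hq x, ← Real.mul_rpow (by linarith) (hp0 x).le]
    exact Real.rpow_le_rpow (by nlinarith [hp0 x]) (hpball z hz).1 hexp.le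
  have hqhigh : ∀ z, ‖z - x‖ ≤ r → q z ≤ (1 + lam) ^ ((1:ℝ)/d) * q x := by
    intro z hz
    rw [hq z, hq x, ← Real.mul_rpow (by linarith) (hp0 x).le]
    exact Real.rpow_le_rpow (hp0 z).le (hpball z hz).2 hexp.le
  -- the straight path
  set σ : ℝ → EuclideanSpace ℝ (Fin d) := fun t => x + t • (y - x) with hσdef
  have hσseg : ∀ t ∈ Set.Icc (0:ℝ) 1, σ t ∈ segment ℝ x y := by
    intro t ht
    rw [segment_eq_image']
    exact ⟨t, ht, rfl⟩
  have hσpath : IsPathIn X x y σ := by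
    refine ⟨by simp [hσdef], by simp [hσdef], fun t ht => (hseg (hσseg t ht)).2, ?_⟩
    exact (contDiff_const.add (contDiff_id.smul contDiff_const)).contDiffOn
  have hσderiv : deriv σ = fun _ => y - x := by
    funext t
    have h1 : HasDerivAt (fun s : ℝ => x + s • (y - x)) (y - x) t := by
      simpa using ((hasDerivAt_id t).smul_const (y - x)).const_add x
    exact h1.deriv
  have hσball : ∀ t ∈ Set.Icc (0:ℝ) 1, ‖σ t - x‖ ≤ r := by
    intro t ht
    have := (hseg (hσseg t ht)).1
    rwa [Metric.mem_closedBall, dist_eq_norm] at this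
  have hσlen : fLength q σ ≤ (1 + lam) ^ ((1:ℝ)/d) * q x * ‖x - y‖ := by
    unfold fLength
    rw [hσderiv]
    have hC : ((1:ℝ) + lam) ^ ((1:ℝ)/d) * q x * ‖x - y‖ =
        ∫ _ in (0:ℝ)..1, (1 + lam) ^ ((1:ℝ)/d) * q x * ‖x - y‖ := by
      simp
    rw [hC]
    apply intervalIntegral.integral_mono_on zero_le_one
    · exact ((hqc.comp (continuous_const.add (continuous_id.smul continuous_const))).mul
        continuous_const).intervalIntegrable _ _
    · exact intervalIntegrable_const
    · intro t ht
      rw [norm_sub_rev x y]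
      exact mul_le_mul_of_nonneg_right (hqhigh _ (hσball t ht)) (norm_nonneg _)
  -- nonnegativity of all lengths
  have hnonneg : ∀ l ∈ {l | ∃ γ, IsPathIn X x y γ ∧ fLength q γ = l}, 0 ≤ l := by
    rintro l ⟨γ, hγ, rfl⟩
    exact intervalIntegral.integral_nonneg zero_le_one
      fun u _ => mul_nonneg (hq0 _) (norm_nonneg _)
  have hmemσ : fLength q σ ∈ {l | ∃ γ, IsPathIn X x y γ ∧ fLength q γ = l} :=
    ⟨σ, hσpath, rfl⟩
  constructor
  · -- lower bound
    rcases eq_or_lt_of_le hr0 with h | h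
    · -- r = 0, hence x = y
      have hxy0 : ‖x - y‖ = 0 := by
        have := hxy
        rw [← h] at this
        exact le_antisymm this (norm_nonneg _)
      rw [hxy0, mul_zero]
      exact Real.sInf_nonneg hnonneg
    · apply le_csInf ⟨_, hmemσ⟩
      rintro l ⟨γ, hγ, rfl⟩
      exact low_path hqc hq0 h (mul_nonneg (Real.rpow_nonneg (by linarith) _) (hq0 x))
        hxy (fun z hz => hqlow z hz) hγ
  · exact le_trans (csInf_le ⟨0, hnonneg⟩ hmemσ) hσlen
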